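/- Let q(s) = 1 + 2is - s²β with β = 1 + 2iξ₀, 0 < ξ̄₀ ≤ ξ₀ ≤ ξ̄₁ < 1. There exist positive constants q₀, q₁ (independent of ξ₀ and θ) such that q₀(1+θ²) ≤ |q(ξ₀+θ)| ≤ q₁(1+θ²) for all real θ. -/
import Mathlib


open Complex

private lemma q_neg_branch (m ξ₀ s : ℝ) (hm : 0 < m) (hm1 : m < 1) (hξ₀pos : 0 < ξ₀)
    (hs2lo : 1 - m / 2 ≤ s ^ 2) (hsneg : s < 0) :
    m / 2 ≤ -(2 * s - 2 * ξ₀ * s ^ 2) := by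
  have hslo : s ≤ -(1 - m / 2) := by nlinarith
  nlinarith [sq_nonneg s, mul_nonneg hξ₀pos.le (sq_nonneg s)]

set_option maxHeartbeats 1000000 in
private lemma q_aux (m ξ₀ s θ N : ℝ) (hm : 0 < m) (hm1 : m < 1) (hr : ξ₀ ≤ 1 - m)
    (hξ₀pos : 0 < ξ₀) (hsθ : s = ξ₀ + θ)
    (hN1 : |1 - s ^ 2| ≤ N) (hN2 : |2 * s - 2 * ξ₀ * s ^ 2| ≤ N)
    (hN3 : N ≤ |1 - s ^ 2| + |2 * s - 2 * ξ₀ * s ^ 2|) :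
    m / 14 * (1 + θ ^ 2) ≤ N ∧ N ≤ 10 * (1 + θ ^ 2) := by
  have hξ₀lt : ξ₀ < 1 := by linarith
  have hθsq : 1 + θ ^ 2 ≤ 3 + 2 * s ^ 2 := by
    have hθ : θ = s - ξ₀ := by rw [hsθ]; ring
    rw [hθ]; nlinarith [sq_nonneg (s + ξ₀), hξ₀lt, hξ₀pos]
  constructor
  · by_cases hc : (m / 4) * (1 + s ^ 2) ≤ |1 - s ^ 2|
    · have h1 : (m / 14) * (1 + θ ^ 2) ≤ (m / 4) * (1 + s ^ 2) := by
        nlinarith [mul_nonneg hm.le (by linarith : (0:ℝ) ≤ 3 + 2 * s ^ 2 - (1 + θ ^ 2)),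
          mul_nonneg hm.le (sq_nonneg s)]
      calc m / 14 * (1 + θ ^ 2) ≤ m / 4 * (1 + s ^ 2) := h1
        _ ≤ |1 - s ^ 2| := hc
        _ ≤ N := hN1
    · push_neg at hc
      rw [abs_lt] at hc
      obtain ⟨hc1, hc2⟩ := hc
      have hs2lo : 1 - m / 2 ≤ s ^ 2 := by nlinarith [sq_nonneg s]
      have h53 : s ^ 2 < 5 / 3 := by
        nlinarith [mul_nonneg (by linarith : (0:ℝ) ≤ 1 - m) (by positivity : (0:ℝ) ≤ 1 + s ^ 2)]
      have hs2hi : s ^ 2 ≤ 1 + m := by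
        nlinarith [mul_pos hm (by linarith : (0:ℝ) < 5 / 3 - s ^ 2)]
      have hθ7 : 1 + θ ^ 2 ≤ 7 := by nlinarith
      have hkey : m / 2 ≤ |2 * s - 2 * ξ₀ * s ^ 2| := by
        rcases le_or_gt 0 s with hspos | hsneg
        · have hslo : 1 - m / 2 ≤ s := by nlinarith
          have hshi : s ≤ 1 + m / 2 := by nlinarith
          have him_lo : m / 2 ≤ 2 * s - 2 * ξ₀ * s ^ 2 := by
            have hξ₀s : ξ₀ * s ≤ 1 - m / 2 := by nlinarith
            nlinarith
          exact le_trans him_lo (le_abs_self _)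
        · exact le_trans (q_neg_branch m ξ₀ s hm hm1 hξ₀pos hs2lo hsneg) (neg_le_abs _)
      calc m / 14 * (1 + θ ^ 2) ≤ m / 14 * 7 :=
            mul_le_mul_of_nonneg_left hθ7 (by linarith)
        _ = m / 2 := by ring
        _ ≤ |2 * s - 2 * ξ₀ * s ^ 2| := hkey
        _ ≤ N := hN2
  · have h1 : |1 - s ^ 2| ≤ 1 + s ^ 2 := by
      rw [abs_le]; constructor <;> nlinarith [sq_nonneg s]
    have h2 : |2 * s - 2 * ξ₀ * s ^ 2| ≤ 1 + 3 * s ^ 2 := by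
      have ha : |2 * s - 2 * ξ₀ * s ^ 2| ≤ |2 * s| + |2 * ξ₀ * s ^ 2| := abs_sub _ _
      have hb : |2 * s| = 2 * |s| := by rw [abs_mul]; simp
      have hc : |2 * ξ₀ * s ^ 2| = 2 * ξ₀ * s ^ 2 := abs_of_nonneg (by positivity)
      have hd : 2 * |s| ≤ 1 + s ^ 2 := by nlinarith [sq_nonneg (|s| - 1), _root_.sq_abs s]
      have he : 2 * ξ₀ * s ^ 2 ≤ 2 * s ^ 2 := by nlinarith [sq_nonneg s, hξ₀lt]
      calc |2 * s - 2 * ξ₀ * s ^ 2| ≤ |2 * s| + |2 * ξ₀ * s ^ 2| := ha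
        _ = 2 * |s| + 2 * ξ₀ * s ^ 2 := by rw [hb, hc]
        _ ≤ 1 + 3 * s ^ 2 := by linarith
    have h3 : s ^ 2 ≤ 2 + 2 * θ ^ 2 := by
      rw [hsθ]; nlinarith [sq_nonneg (ξ₀ - θ), hξ₀pos, hξ₀lt]
    linarith [sq_nonneg θ]

theorem q_two_sided_bound (ξb₀ ξb₁ : ℝ) (h₀ : 0 < ξb₀) (h₀₁ : ξb₀ ≤ ξb₁) (h₁ : ξb₁ < 1) :
    ∃ q₀ q₁ : ℝ, 0 < q₀ ∧ 0 < q₁ ∧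
      ∀ ξ₀ : ℝ, ξ₀ ∈ Set.Icc ξb₀ ξb₁ →
        ∀ θ : ℝ,
          q₀ * (1 + θ ^ 2) ≤ ‖(1 : ℂ) + 2 * I * (ξ₀ + θ) - (1 + 2 * I * ξ₀) * (ξ₀ + θ : ℝ) ^ 2‖ ∧
          ‖(1 : ℂ) + 2 * I * (ξ₀ + θ) - (1 + 2 * I * ξ₀) * (ξ₀ + θ : ℝ) ^ 2‖ ≤ q₁ * (1 + θ ^ 2) := by
  refine ⟨(1 - ξb₁) / 14, 10, by linarith, by norm_num, ?_⟩
  intro ξ₀ hξ θ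
  obtain ⟨hl, hr⟩ := hξ
  have hz : (1 : ℂ) + 2 * I * (ξ₀ + θ) - (1 + 2 * I * ξ₀) * (ξ₀ + θ : ℝ) ^ 2 =
      ((1 - (ξ₀ + θ) ^ 2 : ℝ) : ℂ) +
        ((2 * (ξ₀ + θ) - 2 * ξ₀ * (ξ₀ + θ) ^ 2 : ℝ) : ℂ) * I := by
    push_cast; ring
  rw [hz]
  set z : ℂ := ((1 - (ξ₀ + θ) ^ 2 : ℝ) : ℂ) +
      ((2 * (ξ₀ + θ) - 2 * ξ₀ * (ξ₀ + θ) ^ 2 : ℝ) : ℂ) * I with hzdef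
  have hre : z.re = 1 - (ξ₀ + θ) ^ 2 := by
    rw [hzdef]
    simp only [Complex.add_re, Complex.mul_re, Complex.ofReal_re, Complex.ofReal_im,
      Complex.I_re, Complex.I_im]
    ring
  have him : z.im = 2 * (ξ₀ + θ) - 2 * ξ₀ * (ξ₀ + θ) ^ 2 := by
    rw [hzdef]
    simp only [Complex.add_im, Complex.mul_im, Complex.ofReal_re, Complex.ofReal_im,
      Complex.I_re, Complex.I_im]
    ring
  have hN1 : |1 - (ξ₀ + θ) ^ 2| ≤ ‖z‖ := hre ▸ Complex.abs_re_le_norm z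
  have hN2 : |2 * (ξ₀ + θ) - 2 * ξ₀ * (ξ₀ + θ) ^ 2| ≤ ‖z‖ := him ▸ Complex.abs_im_le_norm z
  have hN3 : ‖z‖ ≤ |1 - (ξ₀ + θ) ^ 2| + |2 * (ξ₀ + θ) - 2 * ξ₀ * (ξ₀ + θ) ^ 2| := by
    have := Complex.norm_le_abs_re_add_abs_im z
    rwa [hre, him] at this
  exact q_aux (1 - ξb₁) ξ₀ (ξ₀ + θ) θ ‖z‖ (by linarith) (by linarith) (by linarith)
    (lt_of_lt_of_le h₀ hl) rfl hN1 hN2 hN3
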